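/- (Relative magnitude of skill shocks.) Under Assumption 4 with parameter k, fix integers t, t', t'' with t' ≤ t − 2 − k and t'' ≥ t + k, and assume cov(w_{t−2}, w_{t'}) ≠ 0, cov(w_{t−2}, w_{t''}) ≠ 0, and μ_t ≠ 0. Then, writing A := cov(w_t − w_{t−2}, w_{t'}) / cov(w_{t−2}, w_{t'}) and B := cov(w_t − w_{t−2}, w_{t''}) / cov(w_{t−2}, w_{t''}), one has 1 + A ≠ 0, Var(θ_{t−2}) ≠ 0, and Var(θ_t − θ_{t−2}) / Var(θ_{t−2}) = (B − A) / (1 + A). -/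

import Mathlib

open MeasureTheory ProbabilityTheory

/-- Covariance of two real-valued random variables under measure `P`. -/
noncomputable def cov {Ω : Type*} [MeasurableSpace Ω] (P : Measure Ω) (X Y : Ω → ℝ) : ℝ :=
  ∫ ω, (X ω - ∫ a, X a ∂P) * (Y ω - ∫ a, Y a ∂P) ∂P

/-- Variance of a real-valued random variable under measure `P`. -/
noncomputable def Var {Ω : Type*} [MeasurableSpace Ω] (P : Measure Ω) (X : Ω → ℝ) : ℝ :=
  cov P X X

section Aux

variable {Ω : Type*} [MeasurableSpace Ω] {P : Measure Ω} [IsProbabilityMeasure P]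

lemma l2_mul_int {X Y : Ω → ℝ} (hX : MemLp X 2 P) (hY : MemLp Y 2 P) :
    Integrable (fun ω => X ω * Y ω) P :=
  memLp_one_iff_integrable.mp
    (hY.smul hX (r := 1))

lemma l2_int {X : Ω → ℝ} (hX : MemLp X 2 P) : Integrable X P :=
  hX.integrable one_le_two

lemma l2_center {X : Ω → ℝ} (hX : MemLp X 2 P) :
    MemLp (fun ω => X ω - ∫ a, X a ∂P) 2 P :=
  hX.sub (memLp_const _)

lemma cov_comm (X Y : Ω → ℝ) : cov P X Y = cov P Y X := by
  unfold cov; simp_rw [mul_comm]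

lemma cov_smul_left (c : ℝ) (X Y : Ω → ℝ) :
    cov P (fun ω => c * X ω) Y = c * cov P X Y := by
  unfold cov
  rw [← integral_const_mul, integral_const_mul]
  congr 1 with ω
  ring

lemma cov_add_left {X X' Y : Ω → ℝ} (hX : MemLp X 2 P) (hX' : MemLp X' 2 P)
    (hY : MemLp Y 2 P) :
    cov P (fun ω => X ω + X' ω) Y = cov P X Y + cov P X' Y := by
  unfold cov
  have hm : (∫ a, X a + X' a ∂P) = (∫ a, X a ∂P) + ∫ a, X' a ∂P :=
    integral_add (l2_int hX) (l2_int hX')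
  have h1 : Integrable (fun ω => (X ω - ∫ a, X a ∂P) * (Y ω - ∫ a, Y a ∂P)) P :=
    l2_mul_int (l2_center hX) (l2_center hY)
  have h2 : Integrable (fun ω => (X' ω - ∫ a, X' a ∂P) * (Y ω - ∫ a, Y a ∂P)) P :=
    l2_mul_int (l2_center hX') (l2_center hY)
  rw [← integral_add h1 h2]
  congr 1 with ω
  rw [hm]
  ring

lemma cov_sub_left {X X' Y : Ω → ℝ} (hX : MemLp X 2 P) (hX' : MemLp X' 2 P)
    (hY : MemLp Y 2 P) :
    cov P (fun ω => X ω - X' ω) Y = cov P X Y - cov P X' Y := by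
  unfold cov
  have hm : (∫ a, X a - X' a ∂P) = (∫ a, X a ∂P) - ∫ a, X' a ∂P :=
    integral_sub (l2_int hX) (l2_int hX')
  have h1 : Integrable (fun ω => (X ω - ∫ a, X a ∂P) * (Y ω - ∫ a, Y a ∂P)) P :=
    l2_mul_int (l2_center hX) (l2_center hY)
  have h2 : Integrable (fun ω => (X' ω - ∫ a, X' a ∂P) * (Y ω - ∫ a, Y a ∂P)) P :=
    l2_mul_int (l2_center hX') (l2_center hY)
  rw [← integral_sub h1 h2]
  congr 1 with ω
  rw [hm]
  ring

end Aux

/-- Relative magnitude of skill shocks: comparing IV estimands using past (`A`) vs future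
(`B`) residuals as instruments identifies `Var (θ t − θ (t−2)) / Var (θ (t−2)) = (B−A)/(1+A)`. -/
theorem relative_skill_shock_variance
    {Ω : Type*} [MeasurableSpace Ω] (P : Measure Ω) [IsProbabilityMeasure P]
    (θ ε : ℤ → Ω → ℝ) (μ : ℤ → ℝ) (w : ℤ → Ω → ℝ)
    (hθ : ∀ t, MemLp (θ t) 2 P) (hε : ∀ t, MemLp (ε t) 2 P)
    (hw : ∀ t ω, w t ω = μ t * θ t ω + ε t ω)
    (k : ℕ) (hk : 1 ≤ k)
    (A4i : ∀ t t' : ℤ, 1 ≤ t - t' →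
      cov P (fun ω => θ t ω - θ (t - 1) ω) (θ t') = 0)
    (A4ii : ∀ t t' : ℤ, cov P (θ t) (ε t') = 0)
    (A4iii : ∀ t t' : ℤ, (k : ℤ) ≤ |t - t'| → cov P (ε t) (ε t') = 0)
    (t t' t'' : ℤ) (ht' : t' ≤ t - 2 - k) (ht'' : t + k ≤ t'')
    (h1 : cov P (w (t - 2)) (w t') ≠ 0)
    (h2 : cov P (w (t - 2)) (w t'') ≠ 0)
    (hμ : μ t ≠ 0)
    (A B : ℝ)
    (hA : A = cov P (fun ω => w t ω - w (t - 2) ω) (w t') / cov P (w (t - 2)) (w t'))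
    (hB : B = cov P (fun ω => w t ω - w (t - 2) ω) (w t'') / cov P (w (t - 2)) (w t'')) :
    1 + A ≠ 0 ∧ Var P (θ (t - 2)) ≠ 0 ∧
      Var P (fun ω => θ t ω - θ (t - 2) ω) / Var P (θ (t - 2)) = (B - A) / (1 + A) := by
  -- expansion of cov of wages
  have hwl2 : ∀ s, MemLp (w s) 2 P := by
    intro s
    have : w s = fun ω => μ s * θ s ω + ε s ω := funext (hw s)
    rw [this]
    exact (((hθ s).const_mul (μ s)).add (hε s))
  have covw : ∀ s r : ℤ, cov P (w s) (w r) =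
      μ s * μ r * cov P (θ s) (θ r) + μ s * cov P (θ s) (ε r)
        + μ r * cov P (ε s) (θ r) + cov P (ε s) (ε r) := by
    intro s r
    have hws : w s = fun ω => μ s * θ s ω + ε s ω := funext (hw s)
    have hwr : w r = fun ω => μ r * θ r ω + ε r ω := funext (hw r)
    rw [hws, hwr]
    rw [cov_add_left ((hθ s).const_mul (μ s)) (hε s)
      (show MemLp (fun ω => μ r * θ r ω + ε r ω) 2 P from
        ((hθ r).const_mul (μ r)).add (hε r)), cov_smul_left]
    rw [cov_comm (P := P) (θ s), cov_comm (P := P) (ε s)]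
    rw [cov_add_left ((hθ r).const_mul (μ r)) (hε r) (hθ s),
        cov_add_left ((hθ r).const_mul (μ r)) (hε r) (hε s),
        cov_smul_left, cov_smul_left]
    rw [cov_comm (P := P) (θ r) (θ s), cov_comm (P := P) (ε r) (θ s),
        cov_comm (P := P) (ε r) (ε s)]
    rw [cov_comm (P := P) (θ r) (ε s)]
    ring
  -- martingale property: cov θ_s θ_r = Var θ_r for s ≥ r
  have mart : ∀ (r : ℤ) (n : ℕ), cov P (θ (r + n)) (θ r) = Var P (θ r) := by
    intro r n
    induction n with
    | zero => simp [Var]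
    | succ m ih =>
      have key := A4i (r + (m + 1 : ℕ)) r (by push_cast; omega)
      have hstep : (r + (m + 1 : ℕ) - 1 : ℤ) = r + m := by push_cast; ring
      rw [hstep] at key
      have := cov_sub_left (P := P) (hθ (r + (m + 1 : ℕ))) (hθ (r + m)) (hθ r)
      rw [key] at this
      have : cov P (θ (r + (m + 1 : ℕ))) (θ r) = cov P (θ (r + (m : ℕ))) (θ r) := by
        have h := this.symm
        push_cast at h ⊢
        linarith
      rw [this, ih]
  have mart' : ∀ s r : ℤ, r ≤ s → cov P (θ s) (θ r) = Var P (θ r) := by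
    intro s r hrs
    have : s = r + ((s - r).toNat : ℤ) := by omega
    rw [this]
    exact mart r _
  -- covariance computations
  have e1 : cov P (w (t - 2)) (w t') = μ (t - 2) * μ t' * Var P (θ t') := by
    rw [covw, A4ii, A4iii _ _ (by rw [abs_of_nonneg (by omega)]; omega),
        cov_comm (P := P) (ε (t - 2)), A4ii, mart' _ _ (by omega)]
    ring
  have e1' : cov P (w t) (w t') = μ t * μ t' * Var P (θ t') := by
    rw [covw, A4ii, A4iii _ _ (by rw [abs_of_nonneg (by omega)]; omega),
        cov_comm (P := P) (ε t), A4ii, mart' _ _ (by omega)]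
    ring
  have e2 : cov P (w (t - 2)) (w t'') = μ (t - 2) * μ t'' * Var P (θ (t - 2)) := by
    rw [covw, A4ii, A4iii _ _ (by rw [abs_of_nonpos (by omega)]; omega),
        cov_comm (P := P) (ε (t - 2)), A4ii,
        cov_comm (P := P) (θ (t - 2)), mart' _ _ (by omega)]
    ring
  have e2' : cov P (w t) (w t'') = μ t * μ t'' * Var P (θ t) := by
    rw [covw, A4ii, A4iii _ _ (by rw [abs_of_nonpos (by omega)]; omega),
        cov_comm (P := P) (ε t), A4ii,
        cov_comm (P := P) (θ t), mart' _ _ (by omega)]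
    ring
  -- nonvanishing pieces
  have hμ2 : μ (t - 2) ≠ 0 := fun h => h1 (by rw [e1, h]; ring)
  have hV' : Var P (θ t') ≠ 0 := fun h => h1 (by rw [e1, h]; ring)
  have hμt' : μ t' ≠ 0 := fun h => h1 (by rw [e1, h]; ring)
  have hV2 : Var P (θ (t - 2)) ≠ 0 := fun h => h2 (by rw [e2, h]; ring)
  have hμt'' : μ t'' ≠ 0 := fun h => h2 (by rw [e2, h]; ring)
  -- numerators
  have num1 : cov P (fun ω => w t ω - w (t - 2) ω) (w t')
      = (μ t - μ (t - 2)) * μ t' * Var P (θ t') := by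
    rw [cov_sub_left (hwl2 t) (hwl2 (t - 2)) (hwl2 t'), e1, e1']
    ring
  have num2 : cov P (fun ω => w t ω - w (t - 2) ω) (w t'')
      = μ t * μ t'' * Var P (θ t) - μ (t - 2) * μ t'' * Var P (θ (t - 2)) := by
    rw [cov_sub_left (hwl2 t) (hwl2 (t - 2)) (hwl2 t''), e2, e2']
  -- A and B simplified
  have hAval : A = (μ t - μ (t - 2)) / μ (t - 2) := by
    rw [hA, num1, e1]
    field_simp
  have h1A : 1 + A = μ t / μ (t - 2) := by
    rw [hAval]; field_simp; ring
  have h1Ane : 1 + A ≠ 0 := by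
    rw [h1A]; exact div_ne_zero hμ hμ2
  have hBval : B = (μ t * Var P (θ t) - μ (t - 2) * Var P (θ (t - 2)))
      / (μ (t - 2) * Var P (θ (t - 2))) := by
    rw [hB, num2, e2]
    field_simp
  -- Var of the difference
  have hVd : Var P (fun ω => θ t ω - θ (t - 2) ω) = Var P (θ t) - Var P (θ (t - 2)) := by
    unfold Var
    rw [cov_sub_left (hθ t) (hθ (t - 2))
      (show MemLp (fun ω => θ t ω - θ (t - 2) ω) 2 P from (hθ t).sub (hθ (t - 2)))]
    rw [cov_comm (P := P) (θ t), cov_comm (P := P) (θ (t - 2))]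
    rw [cov_sub_left (hθ t) (hθ (t - 2)) (hθ t),
        cov_sub_left (hθ t) (hθ (t - 2)) (hθ (t - 2))]
    have hc : cov P (θ t) (θ (t - 2)) = Var P (θ (t - 2)) := mart' _ _ (by omega)
    have hc' : cov P (θ (t - 2)) (θ t) = Var P (θ (t - 2)) := by
      rw [cov_comm]; exact hc
    unfold Var at *
    rw [hc, hc']
    ring
  refine ⟨h1Ane, hV2, ?_⟩
  rw [hVd, hBval, h1A, hAval]
  field_simp
  ring
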